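/- Let χ be a multiplicative character of F_q of order N with gcd(N, p-1) = 1, where q = p^f. Then χ(b) = 1 for all b in the prime subfield F_p^*, and consequently the Gauss sum g(χ) lies in ℤ[ζ_N]. -/
import Mathlib


/-- The canonical additive character `ψ(x) = ζ_p^{Tr_{q/p}(x)}` of a finite field of
characteristic `p`, valued in `ℂ`. -/
noncomputable def canonicalAddChar (p : ℕ) [Fact p.Prime] (F : Type*) [Field F] [Fintype F]
    [Algebra (ZMod p) F] (x : F) : ℂ :=
  Complex.exp (2 * Real.pi * Complex.I * ((Algebra.trace (ZMod p) F x).val : ℂ) / p)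

theorem gaussSum_mem_adjoin_root_of_unity (p f N : ℕ) [Fact p.Prime] (F : Type*) [Field F]
    [Fintype F] [DecidableEq F] [Algebra (ZMod p) F] (hcard : Fintype.card F = p ^ f)
    (χ : MulChar F ℂ) (hord : orderOf χ = N) (hgcd : Nat.gcd N (p - 1) = 1) :
    (∀ b : (ZMod p)ˣ, χ (algebraMap (ZMod p) F b) = 1) ∧
    (∑ x ∈ Finset.univ.erase (0 : F), χ x * canonicalAddChar p F x) ∈
      Algebra.adjoin ℤ ({Complex.exp (2 * Real.pi * Complex.I / N)} : Set ℂ) := by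
  have hp : p.Prime := Fact.out
  have hN : 0 < N := hord ▸ χ.orderOf_pos
  set ζN : ℂ := Complex.exp (2 * Real.pi * Complex.I / N) with hζNdef
  have hζN : IsPrimitiveRoot ζN N := Complex.isPrimitiveRoot_exp N hN.ne'
  have hχmem : ∀ a : F, χ a ∈ Algebra.adjoin ℤ ({ζN} : Set ℂ) := fun a =>
    MulChar.apply_mem_algebraAdjoin (hord ▸ hζN) a
  -- Part 1
  have h1 : ∀ b : (ZMod p)ˣ, χ (algebraMap (ZMod p) F b) = 1 := by
    intro b
    set u : F := algebraMap (ZMod p) F b with hu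
    have hune : u ≠ 0 := by
      simp [hu, map_eq_zero, b.ne_zero]
    have e1 : χ u ^ (p - 1) = 1 := by
      rw [← map_pow, hu, ← map_pow, ZMod.pow_card_sub_one_eq_one b.ne_zero, map_one, map_one]
    have e2 : χ u ^ N = 1 := by
      have hχN : χ ^ N = 1 := by rw [← hord]; exact pow_orderOf_eq_one χ
      rw [← MulChar.pow_apply' χ hN.ne', hχN, MulChar.one_apply (isUnit_iff_ne_zero.mpr hune)]
    have : orderOf (χ u) ∣ 1 := hgcd ▸ Nat.dvd_gcd
      (orderOf_dvd_of_pow_eq_one e2) (orderOf_dvd_of_pow_eq_one e1)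
    exact orderOf_eq_one_iff.mp (Nat.eq_one_of_dvd_one this)
  refine ⟨h1, ?_⟩
  -- Part 2
  classical
  haveI : NeZero p := ⟨hp.ne_zero⟩
  set T : F → ZMod p := fun x => Algebra.trace (ZMod p) F x with hT
  have hTlin : ∀ (c : ZMod p) (x : F), T (algebraMap (ZMod p) F c * x) = c * T x := by
    intro c x
    simp only [hT, ← Algebra.smul_def, map_smul, smul_eq_mul]
  set ζp : ℂ := Complex.exp (2 * Real.pi * Complex.I / p) with hζpdef
  have hζp : IsPrimitiveRoot ζp p := Complex.isPrimitiveRoot_exp p hp.ne_zero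
  have hψ : ∀ x : F, canonicalAddChar p F x = ζp ^ (T x).val := by
    intro x
    unfold canonicalAddChar
    rw [hζpdef, ← Complex.exp_nat_mul]
    congr 1
    push_cast
    ring
  set S : ZMod p → ℂ := fun t => ∑ x ∈ (Finset.univ.erase (0 : F)).filter (fun x => T x = t), χ x
    with hS
  have hSmem : ∀ t, S t ∈ Algebra.adjoin ℤ ({ζN} : Set ℂ) := fun t =>
    Subalgebra.sum_mem _ fun x _ => hχmem x
  have key : ∀ t : ZMod p, t ≠ 0 → S t = S 1 := by
    intro t ht
    have htF : (algebraMap (ZMod p) F t) ≠ 0 := by simp [map_eq_zero, ht]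
    have hinv : χ (algebraMap (ZMod p) F t⁻¹) = 1 := by
      have := h1 (Units.mk0 t ht)⁻¹
      simpa using this
    rw [hS]
    refine Finset.sum_nbij' (fun y => algebraMap (ZMod p) F t⁻¹ * y)
      (fun x => algebraMap (ZMod p) F t * x) ?_ ?_ ?_ ?_ ?_
    · intro y hy
      simp only [Finset.mem_filter, Finset.mem_erase, Finset.mem_univ, and_true] at hy ⊢
      have h1' : algebraMap (ZMod p) F t⁻¹ ≠ 0 := by simp [map_eq_zero, ht]
      exact ⟨mul_ne_zero h1' hy.1, by rw [hTlin, hy.2, inv_mul_cancel₀ ht]⟩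
    · intro x hx
      simp only [Finset.mem_filter, Finset.mem_erase, Finset.mem_univ, and_true] at hx ⊢
      exact ⟨mul_ne_zero htF hx.1, by rw [hTlin, hx.2, mul_one]⟩
    · intro y _
      simp only [← mul_assoc, ← map_mul, mul_inv_cancel₀ ht, map_one, one_mul]
    · intro x _
      simp only [← mul_assoc, ← map_mul, inv_mul_cancel₀ ht, map_one, one_mul]
    · intro y _
      simp only [map_mul, hinv, one_mul]
  have expand : (∑ x ∈ Finset.univ.erase (0 : F), χ x * canonicalAddChar p F x)
      = ∑ t : ZMod p, S t * ζp ^ t.val := by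
    rw [← Finset.sum_fiberwise (Finset.univ.erase (0 : F)) T
      (fun x => χ x * canonicalAddChar p F x)]
    refine Finset.sum_congr rfl fun t _ => ?_
    rw [hS, Finset.sum_mul]
    refine Finset.sum_congr rfl fun x hx => ?_
    rw [hψ x, (Finset.mem_filter.mp hx).2]
  have sum_zp : ∑ t : ZMod p, (ζp : ℂ) ^ t.val = 0 := by
    rw [← hζp.geom_sum_eq_zero hp.one_lt]
    refine Finset.sum_nbij' (fun t => t.val) (fun i => (i : ZMod p)) ?_ ?_ ?_ ?_ ?_
    · intro t _; exact Finset.mem_range.mpr (ZMod.val_lt t)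
    · intro i _; exact Finset.mem_univ _
    · intro t _; exact ZMod.natCast_rightInverse t
    · intro i hi; exact ZMod.val_cast_of_lt (Finset.mem_range.mp hi)
    · intro t _; rfl
  have final : (∑ t : ZMod p, S t * ζp ^ t.val) = S 0 - S 1 := by
    rw [← Finset.sum_erase_add _ _ (Finset.mem_univ (0 : ZMod p))]
    have e0 : S 0 * ζp ^ (0 : ZMod p).val = S 0 := by
      simp [ZMod.val_zero]
    rw [e0]
    have e1 : ∑ t ∈ Finset.univ.erase (0 : ZMod p), S t * ζp ^ t.val
        = S 1 * ∑ t ∈ Finset.univ.erase (0 : ZMod p), ζp ^ t.val := by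
      rw [Finset.mul_sum]
      exact Finset.sum_congr rfl fun t ht => by
        rw [key t (Finset.mem_erase.mp ht).1]
    have e2 : ∑ t ∈ Finset.univ.erase (0 : ZMod p), (ζp : ℂ) ^ t.val = -1 := by
      have := Finset.sum_erase_add Finset.univ (fun t : ZMod p => (ζp : ℂ) ^ t.val)
        (Finset.mem_univ (0 : ZMod p))
      rw [sum_zp] at this
      have h0 : (ζp : ℂ) ^ (0 : ZMod p).val = 1 := by simp [ZMod.val_zero]
      linear_combination this - h0
    rw [e1, e2]
    ring
  rw [expand, final]
  exact Subalgebra.sub_mem _ (hSmem 0) (hSmem 1)
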